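/- Let (X, 𝔸, F_c) be a C*-algebra-valued controlled F_c-metric type space, T : X → X, and suppose there exist P, Q, R ∈ 𝔸 with ‖P‖² + ‖Q‖² + ‖R‖² < 1 such that F_c(Tϖ,Tϖ,Tν̄) ⪯ P* F_c(ϖ,ϖ,ν̄) P + Q* F_c(ϖ,ϖ,Tϖ) Q + R* F_c(ν̄,ν̄,Tν̄) R for all ϖ,ν̄ ∈ X. Then for the Picard sequence ϖ_{n+1} = Tϖ_n starting at any ϖ₀ ∈ X, one has ‖F_c(ϖ_n,ϖ_n,ϖ_{n+1})‖ ≤ k ‖F_c(ϖ_{n−1},ϖ_{n−1},ϖ_n)‖ for all n ≥ 1, where k = (‖P‖² + ‖Q‖²)/(1 − ‖R‖²) < 1; consequently ‖F_c(ϖ_n,ϖ_n,ϖ_{n+1})‖ ≤ kⁿ ‖F_c(ϖ₀,ϖ₀,ϖ₁)‖. -/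
import Mathlib


open Filter Topology

/-- A C*-algebra-valued controlled F_c-metric type space. -/
structure CFcSpace (X : Type*) (A : Type*) [CStarAlgebra A] [PartialOrder A]
    [StarOrderedRing A] where
  Fc : X → X → X → A
  C : X → X → X → A
  C_central : ∀ x y z w, C x y z * w = w * C x y z
  one_le_C : ∀ x y z, (1 : A) ≤ C x y z
  eq_iff : ∀ x y z : X, (x = y ∧ y = z) ↔
    (Fc x x x = Fc y y y ∧ Fc y y y = Fc z z z ∧ Fc z z z = Fc x y z)
  Fc_nonneg : ∀ x : X, (0 : A) ≤ Fc x x x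
  Fc_mono1 : ∀ x y : X, Fc x x x ≤ Fc x x y
  Fc_mono2 : ∀ x y z : X, Fc x x y ≤ Fc x y z
  controlled : ∀ x y z a : X,
    Fc x y z ≤ C x x a * Fc x x a + C y y a * Fc y y a + C z z a * Fc z z a - Fc a a a

namespace CFcSpace

variable {X A : Type*} [CStarAlgebra A] [PartialOrder A] [StarOrderedRing A]

/-- Symmetry of the space. -/
def IsSymmetric (S : CFcSpace X A) : Prop := ∀ x y : X, S.Fc x x y = S.Fc y y x

/-- Convergence of a sequence to a point. -/
def Converges (S : CFcSpace X A) (s : ℕ → X) (x : X) : Prop :=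
  Tendsto (fun n => ‖S.Fc (s n) (s n) x‖) atTop (𝓝 0)

/-- Cauchy sequence. -/
def IsCauchySeq (S : CFcSpace X A) (s : ℕ → X) : Prop :=
  Tendsto (fun p : ℕ × ℕ => ‖S.Fc (s p.1) (s p.1) (s p.2)‖) atTop (𝓝 0)

/-- Completeness of the space. -/
def IsComplete' (S : CFcSpace X A) : Prop :=
  ∀ s : ℕ → X, S.IsCauchySeq s → ∃ x : X, S.Converges s x

end CFcSpace

/-- The Picard iterates of a contractive map satisfy a geometric decay of F_c-norms. -/
theorem picard_norm_decay {X A : Type*} [CStarAlgebra A] [PartialOrder A] [StarOrderedRing A]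
    (S : CFcSpace X A) (T : X → X)
    (P Q R : A) (hPQR : ‖P‖ ^ 2 + ‖Q‖ ^ 2 + ‖R‖ ^ 2 < 1)
    (hcontr : ∀ x y : X, S.Fc (T x) (T x) (T y) ≤
      star P * S.Fc x x y * P + star Q * S.Fc x x (T x) * Q + star R * S.Fc y y (T y) * R)
    (x0 : X) :
    (∀ n : ℕ, 1 ≤ n →
      ‖S.Fc (T^[n] x0) (T^[n] x0) (T^[n + 1] x0)‖ ≤
        (‖P‖ ^ 2 + ‖Q‖ ^ 2) / (1 - ‖R‖ ^ 2) *
          ‖S.Fc (T^[n - 1] x0) (T^[n - 1] x0) (T^[n] x0)‖) ∧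
    (‖P‖ ^ 2 + ‖Q‖ ^ 2) / (1 - ‖R‖ ^ 2) < 1 ∧
    (∀ n : ℕ, ‖S.Fc (T^[n] x0) (T^[n] x0) (T^[n + 1] x0)‖ ≤
      ((‖P‖ ^ 2 + ‖Q‖ ^ 2) / (1 - ‖R‖ ^ 2)) ^ n * ‖S.Fc x0 x0 (T x0)‖) := by

  set k := (‖P‖ ^ 2 + ‖Q‖ ^ 2) / (1 - ‖R‖ ^ 2) with hk
  have hP2 : (0:ℝ) ≤ ‖P‖ ^ 2 := sq_nonneg _
  have hQ2 : (0:ℝ) ≤ ‖Q‖ ^ 2 := sq_nonneg _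
  have hR2 : (0:ℝ) ≤ ‖R‖ ^ 2 := sq_nonneg _
  have hden : (0:ℝ) < 1 - ‖R‖ ^ 2 := by linarith
  have hk0 : 0 ≤ k := div_nonneg (by linarith) hden.le
  have hk1 : k < 1 := by rw [hk, div_lt_one hden]; linarith
  have hpos : ∀ a b : X, (0:A) ≤ S.Fc a a b :=
    fun a b => (S.Fc_nonneg a).trans (S.Fc_mono1 a b)
  have hconj : ∀ (W : A) (x : A), ‖star W * x * W‖ ≤ ‖W‖ ^ 2 * ‖x‖ := by
    intro W x
    calc ‖star W * x * W‖ ≤ ‖star W‖ * ‖x‖ * ‖W‖ :=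
          (norm_mul_le _ _).trans (by gcongr; exact norm_mul_le _ _)
      _ = ‖W‖ ^ 2 * ‖x‖ := by rw [norm_star]; ring
  have step : ∀ n : ℕ, ‖S.Fc (T^[n + 1] x0) (T^[n + 1] x0) (T^[n + 2] x0)‖ ≤
      k * ‖S.Fc (T^[n] x0) (T^[n] x0) (T^[n + 1] x0)‖ := by
    intro n
    set a := T^[n] x0
    set b := T^[n + 1] x0
    set c := T^[n + 2] x0
    have hb : b = T a := Function.iterate_succ_apply' T n x0
    have hc : c = T b := Function.iterate_succ_apply' T (n + 1) x0
    have h := hcontr a b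
    rw [← hb, ← hc] at h
    have h1 : ‖S.Fc b b c‖ ≤
        ‖star P * S.Fc a a b * P + star Q * S.Fc a a b * Q + star R * S.Fc b b c * R‖ :=
      CStarAlgebra.norm_le_norm_of_nonneg_of_le (hpos b c) h
    have h2 : ‖star P * S.Fc a a b * P + star Q * S.Fc a a b * Q + star R * S.Fc b b c * R‖ ≤
        ‖P‖ ^ 2 * ‖S.Fc a a b‖ + ‖Q‖ ^ 2 * ‖S.Fc a a b‖ + ‖R‖ ^ 2 * ‖S.Fc b b c‖ := by
      refine (norm_add_le _ _).trans ?_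
      have := (norm_add_le (star P * S.Fc a a b * P) (star Q * S.Fc a a b * Q))
      have hP := hconj P (S.Fc a a b)
      have hQ := hconj Q (S.Fc a a b)
      have hR := hconj R (S.Fc b b c)
      linarith
    have h3 : (1 - ‖R‖ ^ 2) * ‖S.Fc b b c‖ ≤ (‖P‖ ^ 2 + ‖Q‖ ^ 2) * ‖S.Fc a a b‖ := by
      nlinarith [h1.trans h2]
    rw [hk, div_mul_eq_mul_div, le_div_iff₀ hden, mul_comm ‖S.Fc b b c‖]
    exact h3
  refine ⟨?_, hk1, ?_⟩
  · intro n hn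
    obtain ⟨m, rfl⟩ : ∃ m, n = m + 1 := ⟨n - 1, (Nat.succ_pred_eq_of_pos hn).symm⟩
    simp only [Nat.add_sub_cancel]
    exact step m
  · intro n
    induction n with
    | zero => simp
    | succ n ih =>
      calc ‖S.Fc (T^[n + 1] x0) (T^[n + 1] x0) (T^[n + 2] x0)‖
          ≤ k * ‖S.Fc (T^[n] x0) (T^[n] x0) (T^[n + 1] x0)‖ := step n
        _ ≤ k * (k ^ n * ‖S.Fc x0 x0 (T x0)‖) := by gcongr
        _ = k ^ (n + 1) * ‖S.Fc x0 x0 (T x0)‖ := by ring
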